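/- Let Ps be a transition kernel and Pz an observation kernel with Pz(s', z) > 0 for all s' ∈ S and z ∈ Z. If ρ : Δ(S) → ℝ and V : Δ(S) → ℝ are both convex on Δ(S), then the one-step Bellman backup b ↦ ρ(b) + Σ_{z∈Z} η(b, z) · V(ζ(b, z)) is convex on Δ(S). -/

import Mathlib

/-- The standard probability simplex Δ(S) of beliefs over a finite state set `S`. -/
def simplex (S : Type*) [Fintype S] : Set (S → ℝ) :=
  {b | (∀ s, 0 ≤ b s) ∧ ∑ s, b s = 1}

/-- Observation likelihood `η(b, z)` for transition kernel `Ps` and observation kernel `Pz`. -/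
noncomputable def eta {S Z : Type*} [Fintype S] (Ps : S → S → ℝ) (Pz : S → Z → ℝ)
    (b : S → ℝ) (z : Z) : ℝ :=
  ∑ s', Pz s' z * ∑ s, Ps s s' * b s

/-- Bayes posterior `ζ(b, z)` for transition kernel `Ps` and observation kernel `Pz`. -/
noncomputable def zeta {S Z : Type*} [Fintype S] (Ps : S → S → ℝ) (Pz : S → Z → ℝ)
    (b : S → ℝ) (z : Z) : S → ℝ :=
  fun s' => Pz s' z * (∑ s, Ps s s' * b s) / eta Ps Pz b z

section aux

variable {S Z : Type*} [Fintype S] [Fintype Z]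
variable (Ps : S → S → ℝ) (Pz : S → Z → ℝ)

lemma simplex_convex : Convex ℝ (simplex S) := by
  have : simplex S = stdSimplex ℝ S := rfl
  rw [this]; exact convex_stdSimplex ℝ S

lemma sum_w (hPs1 : ∀ s, ∑ s', Ps s s' = 1) {b : S → ℝ} (hb : b ∈ simplex S) :
    ∑ s', ∑ s, Ps s s' * b s = 1 := by
  rw [Finset.sum_comm]
  calc ∑ s, ∑ s', Ps s s' * b s = ∑ s, b s := by
        refine Finset.sum_congr rfl fun s _ => ?_
        rw [← Finset.sum_mul, hPs1, one_mul]
    _ = 1 := hb.2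

lemma eta_pos (hPs0 : ∀ s s', 0 ≤ Ps s s') (hPs1 : ∀ s, ∑ s', Ps s s' = 1)
    (hPz0 : ∀ s' z, 0 < Pz s' z) {b : S → ℝ} (hb : b ∈ simplex S) (z : Z) :
    0 < eta Ps Pz b z := by
  have hw : ∀ s', 0 ≤ ∑ s, Ps s s' * b s := fun s' =>
    Finset.sum_nonneg fun s _ => mul_nonneg (hPs0 s s') (hb.1 s)
  have hsum := sum_w Ps hPs1 hb
  have hex : ∃ s' : S, 0 < ∑ s, Ps s s' * b s := by
    by_contra h
    push_neg at h
    have : ∑ s' : S, ∑ s, Ps s s' * b s = 0 :=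
      le_antisymm (Finset.sum_nonpos fun s' _ => h s') (Finset.sum_nonneg fun s' _ => hw s')
    rw [hsum] at this; norm_num at this
  obtain ⟨s₀, hs₀⟩ := hex
  refine Finset.sum_pos' (fun s' _ => mul_nonneg (hPz0 s' z).le (hw s')) ⟨s₀, Finset.mem_univ _, ?_⟩
  exact mul_pos (hPz0 s₀ z) hs₀

lemma zeta_mem (hPs0 : ∀ s s', 0 ≤ Ps s s') (hPs1 : ∀ s, ∑ s', Ps s s' = 1)
    (hPz0 : ∀ s' z, 0 < Pz s' z) {b : S → ℝ} (hb : b ∈ simplex S) (z : Z) :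
    zeta Ps Pz b z ∈ simplex S := by
  have hη := eta_pos Ps Pz hPs0 hPs1 hPz0 hb z
  constructor
  · intro s'
    exact div_nonneg (mul_nonneg (hPz0 s' z).le
      (Finset.sum_nonneg fun s _ => mul_nonneg (hPs0 s s') (hb.1 s))) hη.le
  · simp only [zeta]
    rw [← Finset.sum_div,
      show (∑ s', Pz s' z * ∑ s, Ps s s' * b s) = eta Ps Pz b z from rfl, div_self hη.ne']

lemma eta_linear (x y : S → ℝ) (a c : ℝ) (z : Z) :
    eta Ps Pz (a • x + c • y) z = a * eta Ps Pz x z + c * eta Ps Pz y z := by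
  simp only [eta, Finset.mul_sum, ← Finset.sum_add_distrib]
  refine Finset.sum_congr rfl fun s' _ => ?_
  simp only [Pi.add_apply, Pi.smul_apply, smul_eq_mul, mul_add, ← Finset.sum_add_distrib]
  refine Finset.sum_congr rfl fun s _ => by ring

end aux

/-- If `ρ` and `V` are convex on the simplex, then the one-step Bellman backup
`b ↦ ρ(b) + ∑ z, η(b, z) * V(ζ(b, z))` is convex on the simplex. -/
theorem bellman_backup_convexOn
    {S Z : Type*} [Fintype S] [Fintype Z] [Nonempty S] [Nonempty Z]
    (Ps : S → S → ℝ) (Pz : S → Z → ℝ)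
    (hPs0 : ∀ s s', 0 ≤ Ps s s') (hPs1 : ∀ s, ∑ s', Ps s s' = 1)
    (hPz0 : ∀ s' z, 0 < Pz s' z) (hPz1 : ∀ s', ∑ z, Pz s' z = 1)
    (ρ V : (S → ℝ) → ℝ)
    (hρ : ConvexOn ℝ (simplex S) ρ) (hV : ConvexOn ℝ (simplex S) V) :
    ConvexOn ℝ (simplex S)
      (fun b => ρ b + ∑ z, eta Ps Pz b z * V (zeta Ps Pz b z)) := by
  classical
  have key : ∀ z : Z, ConvexOn ℝ (simplex S) (fun b => eta Ps Pz b z * V (zeta Ps Pz b z)) := by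
    intro z
    refine ⟨simplex_convex, ?_⟩
    intro x hx y hy a c ha hc hac
    have hmix : a • x + c • y ∈ simplex S := simplex_convex hx hy ha hc hac
    have hex := eta_pos Ps Pz hPs0 hPs1 hPz0 hx z
    have hey := eta_pos Ps Pz hPs0 hPs1 hPz0 hy z
    have hem := eta_pos Ps Pz hPs0 hPs1 hPz0 hmix z
    have hlin := eta_linear Ps Pz x y a c z
    set ex := eta Ps Pz x z
    set ey := eta Ps Pz y z
    set em := eta Ps Pz (a • x + c • y) z
    have hzeta : zeta Ps Pz (a • x + c • y) z
        = (a * ex / em) • zeta Ps Pz x z + (c * ey / em) • zeta Ps Pz y z := by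
      funext s'
      simp only [Pi.add_apply, Pi.smul_apply, smul_eq_mul, zeta]
      have hW : (∑ s, Ps s s' * (a * x s + c * y s))
          = a * (∑ s, Ps s s' * x s) + c * (∑ s, Ps s s' * y s) := by
        rw [Finset.mul_sum, Finset.mul_sum, ← Finset.sum_add_distrib]
        exact Finset.sum_congr rfl fun s _ => by ring
      rw [hW]
      rw [show eta Ps Pz x z = ex from rfl, show eta Ps Pz y z = ey from rfl,
        show eta Ps Pz (a • x + c • y) z = em from rfl]
      field_simp [hex.ne', hey.ne', hem.ne']
    have hVle : V (zeta Ps Pz (a • x + c • y) z)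
        ≤ (a * ex / em) * V (zeta Ps Pz x z) + (c * ey / em) * V (zeta Ps Pz y z) := by
      rw [hzeta]
      exact hV.2 (zeta_mem Ps Pz hPs0 hPs1 hPz0 hx z) (zeta_mem Ps Pz hPs0 hPs1 hPz0 hy z)
        (div_nonneg (mul_nonneg ha hex.le) hem.le)
        (div_nonneg (mul_nonneg hc hey.le) hem.le)
        (by field_simp; linarith [hlin])
    calc em * V (zeta Ps Pz (a • x + c • y) z)
        ≤ em * ((a * ex / em) * V (zeta Ps Pz x z) + (c * ey / em) * V (zeta Ps Pz y z)) :=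
          mul_le_mul_of_nonneg_left hVle hem.le
      _ = a * (ex * V (zeta Ps Pz x z)) + c * (ey * V (zeta Ps Pz y z)) := by
          field_simp
  have hsum : ∀ t : Finset Z, ConvexOn ℝ (simplex S)
      (fun b => ∑ z ∈ t, eta Ps Pz b z * V (zeta Ps Pz b z)) := by
    intro t
    induction t using Finset.induction with
    | empty => simpa using convexOn_const (0 : ℝ) simplex_convex
    | insert z t hz ih =>
      simp only [Finset.sum_insert hz]
      exact (key _).add ih
  exact hρ.add (hsum Finset.univ)
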